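/- Let A be a vertex of finite height in a monotonous quiver O and let O_A be the clade of A. Then every vertex B of O_A satisfies h(A) ≤ h(B) < ∞ and h_A(B) ≥ h(B) − h(A), where h denotes height in O and h_A denotes height in O_A. -/

import Mathlib

universe u
variable {V : Type u} [Quiver V]

/-- An evolution of length `m` with vertex sequence `A 0, A 1, ..., A m`:
for each `k < m` there is an edge from `A (k+1)` to `A k`
(the paper's evolution `A 0 ← A 1 ← ⋯ ← A m`). -/
def IsEvol (A : ℕ → V) (m : ℕ) : Prop := ∀ k < m, Nonempty (A (k + 1) ⟶ A k)

/-- `Anc X Y` : `X` is an ancestor of `Y`, i.e. there is an evolution from `X` to `Y`. -/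
def Anc (X Y : V) : Prop := ∃ (m : ℕ) (A : ℕ → V), IsEvol A m ∧ A 0 = X ∧ A m = Y

/-- `X` and `Y` are isotypic. -/
def Isotypic (X Y : V) : Prop := Anc X Y ∧ Anc Y X

/-- A vertex is primitive if every ancestor of it is isotypic to it. -/
def Primitive (X : V) : Prop := ∀ B : V, Anc B X → Anc X B

/-- A full evolution for `X` : an evolution from a primitive vertex to `X`. -/
def IsFullEvol (A : ℕ → V) (m : ℕ) (X : V) : Prop :=
  IsEvol A m ∧ Primitive (A 0) ∧ A m = X

/-- The height of a vertex: the least length of a full evolution for it (`⊤` if none). -/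
noncomputable def height (X : V) : ℕ∞ :=
  sInf {n : ℕ∞ | ∃ m : ℕ, n = (m : ℕ∞) ∧ ∃ A : ℕ → V, IsFullEvol A m X}

/-- `A` is a critical ancestor of `B`. -/
def CritAnc (A B : V) : Prop :=
  height A < ⊤ ∧ ∃ (m : ℕ) (E : ℕ → V), 0 < m ∧ IsEvol E m ∧ E 0 = A ∧ E m = B ∧
    height (E 1) = height A + 1

/-- A vertex is normal if any two of its critical ancestors of equal height are isotypic. -/
def NormalVtx (B : V) : Prop :=
  ∀ A A' : V, CritAnc A B → CritAnc A' B → height A = height A' → Isotypic A A'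

/-- The evolution `(A, m)` embeds in the evolution `(B, n)`. -/
def Embeds (A : ℕ → V) (m : ℕ) (B : ℕ → V) (n : ℕ) : Prop :=
  m ≤ n ∧ ∃ r : ℕ → ℕ, (∀ k < m, r k < r (k + 1)) ∧ r m ≤ n ∧
    ∀ k ≤ m, Isotypic (A k) (B (r k))

/-- A universal evolution for `X`: a full evolution for `X` embedding in every
full evolution for `X`. -/
def IsUniversalEvol (A : ℕ → V) (m : ℕ) (X : V) : Prop :=
  IsFullEvol A m X ∧ ∀ (B : ℕ → V) (n : ℕ), IsFullEvol B n X → Embeds A m B n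

/-- A vertex is phylogenetic if it admits a universal evolution. -/
def Phylogenetic (X : V) : Prop := ∃ (A : ℕ → V) (m : ℕ), IsUniversalEvol A m X

/-- A quiver is monotonous if `h(A) ≥ h(B)` for every edge `A → B`. -/
def Monotonous (V : Type u) [Quiver V] : Prop :=
  ∀ A B : V, Nonempty (A ⟶ B) → height B ≤ height A

/-- A vertex `A` is regular if for every descendant `B` of `A` with `h(B) = h(A)`
there is an edge `B → A`. -/
def Regular (A : V) : Prop :=
  ∀ B : V, Anc A B → height B = height A → Nonempty (B ⟶ A)

/-- The clade of a vertex `A`: the full subquiver of descendants of `A`. -/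
abbrev Clade (A : V) : Type u := {B : V // Anc A B}

instance (A : V) : Quiver (Clade A) := ⟨fun X Y => X.val ⟶ Y.val⟩

section Aux

lemma isEvol_trunc {E : ℕ → V} {m k : ℕ} (hE : IsEvol E m) (hk : k ≤ m) : IsEvol E k :=
  fun j hj => hE j (lt_of_lt_of_le hj hk)

lemma anc_refl (X : V) : Anc X X :=
  ⟨0, fun _ => X, fun k hk => absurd hk (by omega), rfl, rfl⟩

lemma isEvol_concat {P E : ℕ → V} {m n : ℕ} (hP : IsEvol P m) (hE : IsEvol E n)
    (hPE : P m = E 0) :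
    IsEvol (fun k => if k < m then P k else E (k - m)) (m + n) := by
  intro k hk
  by_cases h1 : k + 1 < m
  · simpa only [if_pos h1, if_pos (show k < m by omega)] using hP k (by omega)
  · by_cases h2 : k < m
    · have hkm : k + 1 = m := by omega
      simp only [if_neg h1, if_pos h2, show k + 1 - m = 0 by omega]
      rw [← hPE, ← hkm]
      exact hP k (by omega)
    · simp only [if_neg h1, if_neg h2, show k + 1 - m = k - m + 1 by omega]
      exact hE (k - m) (by omega)

lemma height_le_of_full {X : V} {A : ℕ → V} {m : ℕ} (h : IsFullEvol A m X) :
    height X ≤ (m : ℕ∞) :=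
  sInf_le ⟨m, rfl, A, h⟩

lemma height_spec {X : V} (h : height X < ⊤) :
    ∃ m : ℕ, height X = (m : ℕ∞) ∧ ∃ A : ℕ → V, IsFullEvol A m X := by
  have hne : {n : ℕ∞ | ∃ m : ℕ, n = (m : ℕ∞) ∧ ∃ A : ℕ → V, IsFullEvol A m X}.Nonempty := by
    by_contra hc
    rw [Set.not_nonempty_iff_eq_empty] at hc
    rw [height, hc, sInf_empty] at h
    exact absurd h (lt_irrefl _)
  have := csInf_mem hne
  obtain ⟨m, hm, hA⟩ := this
  exact ⟨m, hm, hA⟩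

lemma fullEvol_concat {P E : ℕ → V} {m n : ℕ} {X : V}
    (hP : IsFullEvol P m (E 0)) (hE : IsEvol E n) (hEX : E n = X) :
    ∃ C : ℕ → V, IsFullEvol C (m + n) X := by
  obtain ⟨hPe, hPprim, hPm⟩ := hP
  refine ⟨fun k => if k < m then P k else E (k - m), isEvol_concat hPe hE hPm, ?_, ?_⟩
  · by_cases h : 0 < m
    · simpa [h] using hPprim
    · have hm : m = 0 := by omega
      have : E 0 = P 0 := by rw [← hPm, hm]
      simp only [if_neg (by omega : ¬ (0 : ℕ) < m), show (0:ℕ) - m = 0 by omega, this]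
      exact hPprim
  · simp only [if_neg (by omega : ¬ m + n < m), show m + n - m = n by omega, hEX]

lemma height_le_anc (hmon : Monotonous V) {X Y : V} (h : Anc X Y) :
    height X ≤ height Y := by
  obtain ⟨m, E, hE, hE0, hEm⟩ := h
  have key : ∀ k ≤ m, height (E 0) ≤ height (E k) := by
    intro k hk
    induction k with
    | zero => exact le_refl _
    | succ k ih => exact (ih (by omega)).trans (hmon _ _ (hE k (by omega)))
  rw [← hE0, ← hEm]
  exact key m le_rfl

lemma height_lt_top_of_anc {X Y : V} (hX : height X < ⊤) (h : Anc X Y) :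
    height Y < ⊤ := by
  obtain ⟨m, hm, P, hP⟩ := height_spec hX
  obtain ⟨n, E, hE, hE0, hEn⟩ := h
  obtain ⟨C, hC⟩ := fullEvol_concat (hE0 ▸ hP) hE hEn
  exact lt_of_le_of_lt (height_le_of_full hC) (by exact_mod_cast (WithTop.coe_lt_top (m+n) : ((m+n:ℕ):ℕ∞) < ⊤))

lemma anc_of_cladeAnc {A : V} {X Y : Clade A} (h : Anc X Y) : Anc X.val Y.val := by
  obtain ⟨m, C, hC, hC0, hCm⟩ := h
  exact ⟨m, fun k => (C k).val, fun k hk => hC k hk, by simp [hC0], by simp [hCm]⟩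

lemma cladeAnc_of_anc {A : V} {X : Clade A} (h : Anc A X.val) :
    Anc (⟨A, anc_refl A⟩ : Clade A) X := by
  obtain ⟨m, E, hE, hE0, hEm⟩ := h
  refine ⟨m, fun k => if hk : k ≤ m then ⟨E k, k, E, isEvol_trunc hE hk, hE0, rfl⟩ else X,
    ?_, ?_, ?_⟩
  · intro k hk
    simp only [dif_pos (show k ≤ m by omega), dif_pos (show k + 1 ≤ m by omega)]
    exact hE k hk
  · simp only [dif_pos (Nat.zero_le m)]
    exact Subtype.ext hE0
  · simp only [dif_pos (le_refl m)]
    exact Subtype.ext hEm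

end Aux

theorem stmt_17 (hmon : Monotonous V) (A : V) (hA : height A < ⊤) :
    ∀ B : Clade A, height A ≤ height B.val ∧ height B.val < ⊤ ∧
      height B.val - height A ≤ height B := by
  intro B
  have h1 : height A ≤ height B.val := height_le_anc hmon B.property
  have h2 : height B.val < ⊤ := height_lt_top_of_anc hA B.property
  refine ⟨h1, h2, ?_⟩
  rw [tsub_le_iff_right]
  by_cases hB : height B < ⊤
  · -- there is a short clade full evolution for B
    obtain ⟨n, hn, C, hCe, hCprim, hCn⟩ := height_spec hB
    -- C 0 is a clade-ancestor of ⟨A, _⟩ hence its height in V is ≤ height A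
    have hAC0 : Anc (⟨A, anc_refl A⟩ : Clade A) (C 0) := cladeAnc_of_anc (C 0).property
    have hC0A : Anc (C 0).val A := anc_of_cladeAnc (hCprim _ hAC0)
    have hle : height (C 0).val ≤ height A := height_le_anc hmon hC0A
    obtain ⟨p, hp, P, hP⟩ := height_spec (lt_of_le_of_lt hle hA)
    -- concatenate the short full evolution of (C 0).val with the projected clade evolution
    have hCe' : IsEvol (fun k => (C k).val) n := fun k hk => hCe k hk
    obtain ⟨D, hD⟩ := fullEvol_concat hP hCe' (by rw [hCn])
    calc height B.val ≤ ((p + n : ℕ) : ℕ∞) := height_le_of_full hD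
      _ = (p : ℕ∞) + (n : ℕ∞) := by push_cast; ring
      _ ≤ height B + height A := by
          rw [hn, ← hp]
          exact add_le_add_right (le_of_eq rfl) _ |>.trans
            (add_comm (n : ℕ∞) (height (C 0).val) ▸ add_le_add_right hle _)
  · have : height B = ⊤ := by
      rcases lt_or_eq_of_le (le_top : height B ≤ ⊤) with h | h
      · exact absurd h hB
      · exact h
    rw [this]
    exact le_of_lt (lt_of_lt_of_le h2 le_self_add)
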